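/- Let G be a group, α an ordinal, and H ≤ G a subgroup with Z_{α+1}(H) = H (i.e. H is (α+1)-hypercentral). Then the envelope E_{α+1}(H) satisfies Z_{α+1}(E_{α+1}(H)) = E_{α+1}(H); moreover E_{α+1}(H) is exactly (α+1)-hypercentral (its degree of hypercentrality is exactly α+1 if H has degree α+1). -/

import Mathlib

open Ordinal

section Defs
variable {G : Type*} [Group G]

attribute [local instance] Classical.propDecidable

/-- The commutator `[x,y] = x⁻¹y⁻¹xy` as in the paper. -/
def pcomm (x y : G) : G := x⁻¹ * y⁻¹ * x * y

/-- Transfinite upper central series of the (sub)set `E` of `G`, viewed inside `G`. -/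
noncomputable def ZSet (E : Set G) (α : Ordinal) : Set G :=
  if α = 0 then {1}
  else if hs : ∃ β < α, α = β + 1 then
    {x | x ∈ E ∧ ∀ g ∈ E, pcomm x g ∈ ZSet E hs.choose}
  else ⋃ (β : Ordinal) (_ : β < α), ZSet E β
termination_by α
decreasing_by all_goals first | assumption | exact hs.choose_spec.1

/-- Transfinite iterated centralizers `C_E^α(H)` of `H` inside the ambient set `E ⊆ G`. -/
noncomputable def CIter (E H : Set G) (α : Ordinal) : Set G :=
  if α = 0 then {1}
  else if hs : ∃ β < α, α = β + 1 then
    {x | x ∈ E ∧ (∀ β < α, ∀ a : G, a ∈ CIter E H β ↔ x * a * x⁻¹ ∈ CIter E H β)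
       ∧ ∀ h ∈ H, pcomm x h ∈ CIter E H hs.choose}
  else ⋃ (β : Ordinal) (_ : β < α), CIter E H β
termination_by α
decreasing_by all_goals first | assumption | exact hs.choose_spec.1

/-- Transfinite envelopes `E_α(H)` of `H ⊆ G`. -/
noncomputable def Env (H : Set G) (α : Ordinal) : Set G :=
  if α = 0 then Set.univ
  else if hs : ∃ β < α, α = β + 1 then
    {g | g ∈ Env H hs.choose ∧
      ∀ c ∈ CIter (Env H hs.choose) H (hs.choose + 1),
        pcomm g c ∈ CIter (Env H hs.choose) H hs.choose}
  else ⋂ (β : Ordinal) (_ : β < α), Env H β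
termination_by α
decreasing_by all_goals first | assumption | exact hs.choose_spec.1

end Defs

section Proofs
variable {G : Type*} [Group G]

lemma oadd_one_inj {a b : Ordinal} (h : a + 1 = b + 1) : a = b := by
  rw [Ordinal.add_one_eq_succ, Ordinal.add_one_eq_succ] at h
  exact Order.succ_eq_succ_iff.mp h

lemma succ_ex (β : Ordinal) : ∃ γ < β + 1, β + 1 = γ + 1 := ⟨β, lt_add_one β, rfl⟩

lemma succ_choose (β : Ordinal) : (succ_ex β).choose = β :=
  (oadd_one_inj (succ_ex β).choose_spec.2).symm

lemma osucc_ne_zero (β : Ordinal) : β + 1 ≠ 0 := by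
  rw [Ordinal.add_one_eq_succ]; exact Ordinal.succ_ne_zero β

lemma not_ex_succ {δ : Ordinal} (h : Order.IsSuccLimit δ) : ¬ ∃ γ < δ, δ = γ + 1 := by
  rintro ⟨γ, hγ, rfl⟩
  exact absurd ((Ordinal.add_one_eq_succ γ) ▸ h.succ_lt hγ) (lt_irrefl _)

lemma olimit_succ_lt {δ γ : Ordinal} (h : Order.IsSuccLimit δ) (hγ : γ < δ) : γ + 1 < δ := by
  rw [Ordinal.add_one_eq_succ]; exact h.succ_lt hγ

/-! ### Unfolding lemmas -/

lemma ZSet_zero (E : Set G) : ZSet E 0 = {1} := by rw [ZSet]; simp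

lemma ZSet_succ (E : Set G) (β : Ordinal) :
    ZSet E (β + 1) = {x | x ∈ E ∧ ∀ g ∈ E, pcomm x g ∈ ZSet E β} := by
  rw [ZSet, if_neg (osucc_ne_zero β), dif_pos (succ_ex β), succ_choose β]

lemma ZSet_limit (E : Set G) {δ : Ordinal} (h : Order.IsSuccLimit δ) :
    ZSet E δ = ⋃ (γ : Ordinal) (_ : γ < δ), ZSet E γ := by
  rw [ZSet, if_neg h.ne_zero, dif_neg (not_ex_succ h)]

lemma mem_ZSet_succ {E : Set G} {β : Ordinal} {x : G} :
    x ∈ ZSet E (β + 1) ↔ x ∈ E ∧ ∀ g ∈ E, pcomm x g ∈ ZSet E β := by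
  rw [ZSet_succ]; rfl

lemma mem_ZSet_limit {E : Set G} {δ : Ordinal} (h : Order.IsSuccLimit δ) {x : G} :
    x ∈ ZSet E δ ↔ ∃ γ < δ, x ∈ ZSet E γ := by
  rw [ZSet_limit E h]; simp

lemma CIter_zero (E H : Set G) : CIter E H 0 = {1} := by rw [CIter]; simp

lemma CIter_succ (E H : Set G) (β : Ordinal) :
    CIter E H (β + 1) = {x | x ∈ E ∧
      (∀ δ < β + 1, ∀ a : G, a ∈ CIter E H δ ↔ x * a * x⁻¹ ∈ CIter E H δ)
      ∧ ∀ h ∈ H, pcomm x h ∈ CIter E H β} := by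
  rw [CIter, if_neg (osucc_ne_zero β), dif_pos (succ_ex β), succ_choose β]

lemma mem_CIter_succ {E H : Set G} {β : Ordinal} {x : G} :
    x ∈ CIter E H (β + 1) ↔ x ∈ E ∧
      (∀ δ < β + 1, ∀ a : G, a ∈ CIter E H δ ↔ x * a * x⁻¹ ∈ CIter E H δ)
      ∧ ∀ h ∈ H, pcomm x h ∈ CIter E H β := by
  rw [CIter_succ]; rfl

lemma CIter_limit (E H : Set G) {δ : Ordinal} (h : Order.IsSuccLimit δ) :
    CIter E H δ = ⋃ (γ : Ordinal) (_ : γ < δ), CIter E H γ := by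
  rw [CIter, if_neg h.ne_zero, dif_neg (not_ex_succ h)]

lemma mem_CIter_limit {E H : Set G} {δ : Ordinal} (h : Order.IsSuccLimit δ) {x : G} :
    x ∈ CIter E H δ ↔ ∃ γ < δ, x ∈ CIter E H γ := by
  rw [CIter_limit E H h]; simp

lemma Env_zero (H : Set G) : Env H 0 = Set.univ := by rw [Env]; simp

lemma Env_succ (H : Set G) (β : Ordinal) :
    Env H (β + 1) = {g | g ∈ Env H β ∧
      ∀ c ∈ CIter (Env H β) H (β + 1), pcomm g c ∈ CIter (Env H β) H β} := by
  rw [Env, if_neg (osucc_ne_zero β), dif_pos (succ_ex β), succ_choose β]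

lemma mem_Env_succ {H : Set G} {β : Ordinal} {g : G} :
    g ∈ Env H (β + 1) ↔ g ∈ Env H β ∧
      ∀ c ∈ CIter (Env H β) H (β + 1), pcomm g c ∈ CIter (Env H β) H β := by
  rw [Env_succ]; rfl

lemma Env_limit (H : Set G) {δ : Ordinal} (h : Order.IsSuccLimit δ) :
    Env H δ = ⋂ (γ : Ordinal) (_ : γ < δ), Env H γ := by
  rw [Env, if_neg h.ne_zero, dif_neg (not_ex_succ h)]

lemma mem_Env_limit {H : Set G} {δ : Ordinal} (h : Order.IsSuccLimit δ) {g : G} :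
    g ∈ Env H δ ↔ ∀ γ < δ, g ∈ Env H γ := by
  rw [Env_limit H h]; simp

/-! ### pcomm identities -/

lemma pcomm_one_left (y : G) : pcomm (1 : G) y = 1 := by simp [pcomm]

lemma pcomm_inv_eq (x y : G) : (pcomm x y)⁻¹ = pcomm y x := by simp [pcomm]; group

lemma pcomm_mul_left (x y c : G) :
    pcomm (x * y) c = (y⁻¹ * pcomm x c * y) * pcomm y c := by simp [pcomm]; group

lemma pcomm_inv_left (x c : G) : pcomm x⁻¹ c = x * (pcomm x c)⁻¹ * x⁻¹ := by
  simp [pcomm]; group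

lemma pcomm_mem_of_closed {S : Set G}
    (h1 : ∀ x ∈ S, ∀ y ∈ S, x * y ∈ S) (h2 : ∀ x ∈ S, x⁻¹ ∈ S)
    {x y : G} (hx : x ∈ S) (hy : y ∈ S) : pcomm x y ∈ S := by
  exact h1 _ (h1 _ (h1 _ (h2 _ hx) _ (h2 _ hy)) _ hx) _ hy

end Proofs
section Proofs2
variable {G : Type*} [Group G]

/-- Closure properties of a subgroup, for plain sets. -/
def SClosed (S : Set G) : Prop :=
  1 ∈ S ∧ (∀ x ∈ S, ∀ y ∈ S, x * y ∈ S) ∧ (∀ x ∈ S, x⁻¹ ∈ S)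

lemma mem_CIter_zero {E Hs : Set G} {x : G} : x ∈ CIter E Hs 0 ↔ x = 1 := by
  rw [CIter_zero]; exact Set.mem_singleton_iff

lemma CIter_props (E Hs : Set G) (hE : SClosed E) : ∀ δ : Ordinal,
    SClosed (CIter E Hs δ) ∧ (∀ γ ≤ δ, CIter E Hs γ ⊆ CIter E Hs δ) ∧
      CIter E Hs δ ⊆ E := by
  intro δ
  induction δ using Ordinal.induction with
  | h δ IH =>
  rcases Ordinal.zero_or_succ_or_isSuccLimit δ with h0 | ⟨η, rfl⟩ | hlim
  · subst h0
    refine ⟨⟨?_, ?_, ?_⟩, ?_, ?_⟩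
    · rw [CIter_zero]; rfl
    · intro x hx y hy
      rw [mem_CIter_zero] at *; subst hx; subst hy; simp
    · intro x hx; rw [mem_CIter_zero] at *; subst hx; simp
    · intro γ hγ; rw [nonpos_iff_eq_zero.mp hγ]
    · intro x hx; rw [mem_CIter_zero] at hx; subst hx; exact hE.1
  · rw [← Ordinal.add_one_eq_succ] at *
    have SCη := (IH η (lt_add_one η)).1
    have subEη := (IH η (lt_add_one η)).2.2
    -- 1 ∈ C (η+1)
    have one_mem : (1 : G) ∈ CIter E Hs (η + 1) := by
      rw [mem_CIter_succ]
      refine ⟨hE.1, fun δ' _ a => by simp, fun h hh => ?_⟩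
      rw [pcomm_one_left]; exact SCη.1
    have SC : SClosed (CIter E Hs (η + 1)) := by
      refine ⟨one_mem, ?_, ?_⟩
      · intro x hx y hy
        rw [mem_CIter_succ] at hx hy ⊢
        obtain ⟨xE, xN, xH⟩ := hx
        obtain ⟨yE, yN, yH⟩ := hy
        refine ⟨hE.2.1 _ xE _ yE, ?_, ?_⟩
        · intro δ' hδ' a
          have e : x * (y * a * y⁻¹) * x⁻¹ = (x * y) * a * (x * y)⁻¹ := by group
          rw [(yN δ' hδ' a).trans (xN δ' hδ' (y * a * y⁻¹)), e]
        · intro h hh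
          rw [pcomm_mul_left]
          have d2 : y⁻¹ * pcomm x h * y ∈ CIter E Hs η := by
            apply (yN η (lt_add_one η) (y⁻¹ * pcomm x h * y)).mpr
            have e : y * (y⁻¹ * pcomm x h * y) * y⁻¹ = pcomm x h := by group
            rw [e]; exact xH h hh
          exact SCη.2.1 _ d2 _ (yH h hh)
      · intro x hx
        rw [mem_CIter_succ] at hx ⊢
        obtain ⟨xE, xN, xH⟩ := hx
        refine ⟨hE.2.2 _ xE, ?_, ?_⟩
        · intro δ' hδ' a
          constructor
          · intro ha
            apply (xN δ' hδ' (x⁻¹ * a * x⁻¹⁻¹)).mpr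
            have e : x * (x⁻¹ * a * x⁻¹⁻¹) * x⁻¹ = a := by group
            rw [e]; exact ha
          · intro ha
            have h2 := (xN δ' hδ' (x⁻¹ * a * x⁻¹⁻¹)).mp ha
            have e : x * (x⁻¹ * a * x⁻¹⁻¹) * x⁻¹ = a := by group
            rw [e] at h2; exact h2
        · intro h hh
          rw [pcomm_inv_left]
          exact (xN η (lt_add_one η) _).mp (SCη.2.2 _ (xH h hh))
    refine ⟨SC, ?_, fun x hx => ((mem_CIter_succ).mp hx).1⟩
    -- monotonicity
    have key : CIter E Hs η ⊆ CIter E Hs (η + 1) := by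
      rcases Ordinal.zero_or_succ_or_isSuccLimit η with h0 | ⟨θ, rfl⟩ | hlimη
      · subst h0
        intro x hx; rw [mem_CIter_zero] at hx; subst hx; exact one_mem
      · rw [← Ordinal.add_one_eq_succ] at *
        intro x hx
        have hx' := hx
        rw [mem_CIter_succ] at hx' ⊢
        obtain ⟨xE, xN, xH⟩ := hx'
        refine ⟨xE, ?_, ?_⟩
        · intro δ' hδ' a
          rcases lt_or_eq_of_le (Order.lt_succ_iff.mp ((Ordinal.add_one_eq_succ (θ+1)) ▸ hδ')) with
            hlt | heq
          · exact xN δ' hlt a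
          · subst heq
            have SCθ1 := (IH (θ + 1) (lt_add_one _)).1
            constructor
            · intro ha
              exact SCθ1.2.1 _ (SCθ1.2.1 _ hx _ ha) _ (SCθ1.2.2 _ hx)
            · intro ha
              have : x⁻¹ * (x * a * x⁻¹) * x ∈ CIter E Hs (θ + 1) :=
                SCθ1.2.1 _ (SCθ1.2.1 _ (SCθ1.2.2 _ hx) _ ha) _ hx
              have e : x⁻¹ * (x * a * x⁻¹) * x = a := by group
              rw [e] at this; exact this
        · intro h hh
          exact (IH (θ + 1) (lt_add_one _)).2.1 θ ((le_self_add : θ ≤ θ + 1)) (xH h hh)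
      · intro x hx
        rw [mem_CIter_limit hlimη] at hx
        obtain ⟨θ, hθ, hx⟩ := hx
        -- x ∈ C (θ+1)
        have hx1 : x ∈ CIter E Hs (θ + 1) :=
          (IH (θ + 1) (lt_trans (olimit_succ_lt hlimη hθ) (lt_add_one η))).2.1 θ
            ((le_self_add : θ ≤ θ + 1)) hx
        -- a uniform normalization fact
        have normx : ∀ δ' < η, ∀ a : G,
            a ∈ CIter E Hs δ' ↔ x * a * x⁻¹ ∈ CIter E Hs δ' := by
          intro δ' hδ' a
          have hmax : max θ δ' + 1 < η := olimit_succ_lt hlimη (max_lt hθ hδ')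
          have hx2 : x ∈ CIter E Hs (max θ δ' + 1) :=
            (IH _ (lt_trans hmax (lt_add_one η))).2.1 (θ + 1)
              (by
                have : θ ≤ max θ δ' := le_max_left θ δ'
                rw [Ordinal.add_one_eq_succ, Ordinal.add_one_eq_succ]
                exact Order.succ_le_succ this) hx1
          rw [mem_CIter_succ] at hx2
          exact hx2.2.1 δ' (lt_of_le_of_lt (le_max_right θ δ')
            ((Ordinal.add_one_eq_succ _) ▸ Order.lt_succ _)) a
        rw [mem_CIter_succ] at hx1 ⊢
        obtain ⟨xE, _, xH⟩ := hx1
        refine ⟨xE, ?_, ?_⟩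
        · intro δ' hδ' a
          rcases lt_or_eq_of_le (Order.lt_succ_iff.mp ((Ordinal.add_one_eq_succ η) ▸ hδ')) with
            hlt | heq
          · exact normx δ' hlt a
          · subst heq
            rw [mem_CIter_limit hlimη, mem_CIter_limit hlimη]
            constructor
            · rintro ⟨θ', hθ', ha⟩
              exact ⟨θ', hθ', (normx θ' hθ' a).mp ha⟩
            · rintro ⟨θ', hθ', ha⟩
              exact ⟨θ', hθ', (normx θ' hθ' a).mpr ha⟩
        · intro h hh
          rw [mem_CIter_limit hlimη]
          exact ⟨θ, hθ, xH h hh⟩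
    intro γ hγ
    rcases lt_or_eq_of_le hγ with hlt | heq
    · have : γ ≤ η := Order.lt_succ_iff.mp ((Ordinal.add_one_eq_succ η) ▸ hlt)
      exact subset_trans ((IH η (lt_add_one η)).2.1 γ this) key
    · subst heq; rfl
  · -- limit case
    refine ⟨⟨?_, ?_, ?_⟩, ?_, ?_⟩
    · rw [mem_CIter_limit hlim]
      exact ⟨0, hlim.pos, by rw [mem_CIter_zero]⟩
    · intro x hx y hy
      rw [mem_CIter_limit hlim] at hx hy ⊢
      obtain ⟨γ₁, hγ₁, hx⟩ := hx
      obtain ⟨γ₂, hγ₂, hy⟩ := hy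
      have hm : max γ₁ γ₂ < δ := max_lt hγ₁ hγ₂
      refine ⟨max γ₁ γ₂, hm, (IH _ hm).1.2.1 _ ((IH _ hm).2.1 γ₁ (le_max_left _ _) hx) _
        ((IH _ hm).2.1 γ₂ (le_max_right _ _) hy)⟩
    · intro x hx
      rw [mem_CIter_limit hlim] at hx ⊢
      obtain ⟨γ₁, hγ₁, hx⟩ := hx
      exact ⟨γ₁, hγ₁, (IH _ hγ₁).1.2.2 _ hx⟩
    · intro γ hγ
      rcases lt_or_eq_of_le hγ with hlt | heq
      · intro x hx
        rw [mem_CIter_limit hlim]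
        exact ⟨γ, hlt, hx⟩
      · subst heq; rfl
    · intro x hx
      rw [mem_CIter_limit hlim] at hx
      obtain ⟨γ₁, hγ₁, hx⟩ := hx
      exact (IH _ hγ₁).2.2 hx

end Proofs2
section Proofs3
variable {G : Type*} [Group G]

lemma CIter_conj (E Hs : Set G) : ∀ δ : Ordinal, ∀ x : G,
    (∀ a ∈ E, x * a * x⁻¹ ∈ E) → (∀ a ∈ E, x⁻¹ * a * x ∈ E) →
    (∀ a ∈ Hs, x * a * x⁻¹ ∈ Hs) → (∀ a ∈ Hs, x⁻¹ * a * x ∈ Hs) →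
    ∀ y ∈ CIter E Hs δ, x * y * x⁻¹ ∈ CIter E Hs δ := by
  intro δ
  induction δ using Ordinal.induction with
  | h δ IH =>
  intro x hE1 hE2 hH1 hH2 y hy
  have hE1' : ∀ a ∈ E, x⁻¹ * a * x⁻¹⁻¹ ∈ E := fun a ha => by rw [inv_inv]; exact hE2 a ha
  have hE2' : ∀ a ∈ E, x⁻¹⁻¹ * a * x⁻¹ ∈ E := fun a ha => by rw [inv_inv]; exact hE1 a ha
  have hH1' : ∀ a ∈ Hs, x⁻¹ * a * x⁻¹⁻¹ ∈ Hs := fun a ha => by rw [inv_inv]; exact hH2 a ha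
  have hH2' : ∀ a ∈ Hs, x⁻¹⁻¹ * a * x⁻¹ ∈ Hs := fun a ha => by rw [inv_inv]; exact hH1 a ha
  have conjiff : ∀ δ' < δ, ∀ a : G, a ∈ CIter E Hs δ' ↔ x * a * x⁻¹ ∈ CIter E Hs δ' := by
    intro δ' hδ' a
    constructor
    · exact fun h => IH δ' hδ' x hE1 hE2 hH1 hH2 a h
    · intro h
      have := IH δ' hδ' x⁻¹ hE1' hE2' hH1' hH2' _ h
      have e : x⁻¹ * (x * a * x⁻¹) * x⁻¹⁻¹ = a := by group
      rw [e] at this; exact this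
  rcases Ordinal.zero_or_succ_or_isSuccLimit δ with h0 | ⟨η, rfl⟩ | hlim
  · subst h0
    rw [mem_CIter_zero] at hy ⊢; subst hy; simp
  · rw [← Ordinal.add_one_eq_succ] at *
    rw [mem_CIter_succ] at hy ⊢
    obtain ⟨yE, yN, yH⟩ := hy
    refine ⟨hE1 _ yE, ?_, ?_⟩
    · intro δ' hδ' a
      have i1 : a ∈ CIter E Hs δ' ↔ x⁻¹ * a * x ∈ CIter E Hs δ' := by
        have := conjiff δ' hδ' (x⁻¹ * a * x)
        have e : x * (x⁻¹ * a * x) * x⁻¹ = a := by group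
        rw [e] at this; exact this.symm
      have i2 := yN δ' hδ' (x⁻¹ * a * x)
      have i3 := conjiff δ' hδ' (y * (x⁻¹ * a * x) * y⁻¹)
      have e : x * (y * (x⁻¹ * a * x) * y⁻¹) * x⁻¹
          = (x * y * x⁻¹) * a * (x * y * x⁻¹)⁻¹ := by group
      rw [e] at i3
      exact (i1.trans i2).trans i3
    · intro h hh
      have e : pcomm (x * y * x⁻¹) h = x * pcomm y (x⁻¹ * h * x) * x⁻¹ := by
        simp [pcomm]; group
      rw [e]
      exact IH η (lt_add_one η) x hE1 hE2 hH1 hH2 _ (yH _ (hH2 h hh))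
  · rw [mem_CIter_limit hlim] at hy ⊢
    obtain ⟨γ, hγ, hy⟩ := hy
    exact ⟨γ, hγ, IH γ hγ x hE1 hE2 hH1 hH2 y hy⟩
end Proofs3
section Proofs4
variable {G : Type*} [Group G]

lemma mem_ZSet_zero {E : Set G} {x : G} : x ∈ ZSet E 0 ↔ x = 1 := by
  rw [ZSet_zero]; exact Set.mem_singleton_iff

lemma ZSet_mono (E : Set G) (h1 : (1 : G) ∈ E) :
    ∀ δ γ : Ordinal, γ ≤ δ → ZSet E γ ⊆ ZSet E δ := by
  intro δ
  induction δ using Ordinal.induction with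
  | h δ IH =>
  intro γ hγ
  rcases lt_or_eq_of_le hγ with hlt | heq
  · rcases Ordinal.zero_or_succ_or_isSuccLimit δ with h0 | ⟨ε, rfl⟩ | hlim
    · exact absurd (h0 ▸ hlt) (by simp : ¬ γ < 0)
    · rw [← Ordinal.add_one_eq_succ] at *
      have hγε : γ ≤ ε := Order.lt_succ_iff.mp ((Ordinal.add_one_eq_succ ε) ▸ hlt)
      refine subset_trans (IH ε (lt_add_one ε) γ hγε) ?_
      -- ZSet E ε ⊆ ZSet E (ε+1)
      rcases Ordinal.zero_or_succ_or_isSuccLimit ε with e0 | ⟨ζ, rfl⟩ | hlimε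
      · subst e0
        intro x hx
        rw [mem_ZSet_zero] at hx; subst hx
        rw [mem_ZSet_succ]
        exact ⟨h1, fun g hg => by rw [pcomm_one_left, mem_ZSet_zero]⟩
      · rw [← Ordinal.add_one_eq_succ] at *
        intro x hx
        rw [mem_ZSet_succ] at hx ⊢
        exact ⟨hx.1, fun g hg => IH (ζ + 1) (lt_add_one _) ζ ((le_self_add : ζ ≤ ζ + 1))
          (hx.2 g hg)⟩
      · intro x hx
        rw [mem_ZSet_limit hlimε] at hx
        obtain ⟨ζ, hζ, hx⟩ := hx
        have hx1 : x ∈ ZSet E (ζ + 1) :=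
          IH (ζ + 1) (lt_trans (olimit_succ_lt hlimε hζ) (lt_add_one ε)) ζ
            ((le_self_add : ζ ≤ ζ + 1)) hx
        rw [mem_ZSet_succ] at hx1 ⊢
        refine ⟨hx1.1, fun g hg => ?_⟩
        rw [mem_ZSet_limit hlimε]
        exact ⟨ζ, hζ, hx1.2 g hg⟩
    · intro x hx
      rw [mem_ZSet_limit hlim]
      exact ⟨γ, hlt, hx⟩
  · subst heq; rfl

lemma ZSet_restrict (E : Set G) (H : Subgroup G) (hHE : (H : Set G) ⊆ E) :
    ∀ δ : Ordinal, ∀ x ∈ ZSet E δ, x ∈ (H : Set G) → x ∈ ZSet (H : Set G) δ := by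
  intro δ
  induction δ using Ordinal.induction with
  | h δ IH =>
  intro x hx hxH
  rcases Ordinal.zero_or_succ_or_isSuccLimit δ with h0 | ⟨η, rfl⟩ | hlim
  · subst h0; rwa [mem_ZSet_zero] at hx ⊢
  · rw [← Ordinal.add_one_eq_succ] at *
    rw [mem_ZSet_succ] at hx ⊢
    refine ⟨hxH, fun g hg => ?_⟩
    have h1 : pcomm x g ∈ ZSet E η := hx.2 g (hHE hg)
    have h2 : pcomm x g ∈ (H : Set G) := by
      have hx' : x ∈ H := hxH
      have hg' : g ∈ H := hg
      exact H.mul_mem (H.mul_mem (H.mul_mem (H.inv_mem hx') (H.inv_mem hg')) hx') hg'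
    exact IH η (lt_add_one η) _ h1 h2
  · rw [mem_ZSet_limit hlim] at hx ⊢
    obtain ⟨γ, hγ, hx⟩ := hx
    exact ⟨γ, hγ, IH γ hγ x hx hxH⟩

lemma SClosed_subgroup (H : Subgroup G) : SClosed (H : Set G) :=
  ⟨H.one_mem, fun x hx y hy => H.mul_mem hx hy, fun x hx => H.inv_mem hx⟩

lemma ZSet_subset_CIter (H : Subgroup G) (E : Set G) (hE : SClosed E)
    (hHE : (H : Set G) ⊆ E) :
    ∀ δ : Ordinal, ZSet (H : Set G) δ ⊆ CIter E (H : Set G) δ := by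
  intro δ
  induction δ using Ordinal.induction with
  | h δ IH =>
  intro z hz
  rcases Ordinal.zero_or_succ_or_isSuccLimit δ with h0 | ⟨η, rfl⟩ | hlim
  · subst h0
    rw [mem_ZSet_zero] at hz; rw [mem_CIter_zero]; exact hz
  · rw [← Ordinal.add_one_eq_succ] at *
    rw [mem_ZSet_succ] at hz
    obtain ⟨zH, zcl⟩ := hz
    have cE1 : ∀ a ∈ E, z * a * z⁻¹ ∈ E :=
      fun a ha => hE.2.1 _ (hE.2.1 _ (hHE zH) _ ha) _ (hE.2.2 _ (hHE zH))
    have cE2 : ∀ a ∈ E, z⁻¹ * a * z ∈ E :=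
      fun a ha => hE.2.1 _ (hE.2.1 _ (hE.2.2 _ (hHE zH)) _ ha) _ (hHE zH)
    have hscl := SClosed_subgroup H
    have cH1 : ∀ a ∈ (H : Set G), z * a * z⁻¹ ∈ (H : Set G) :=
      fun a ha => hscl.2.1 _ (hscl.2.1 _ zH _ ha) _ (hscl.2.2 _ zH)
    have cH2 : ∀ a ∈ (H : Set G), z⁻¹ * a * z ∈ (H : Set G) :=
      fun a ha => hscl.2.1 _ (hscl.2.1 _ (hscl.2.2 _ zH) _ ha) _ zH
    rw [mem_CIter_succ]
    refine ⟨hHE zH, ?_, ?_⟩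
    · intro δ' hδ' a
      constructor
      · exact fun h => CIter_conj E (H : Set G) δ' z cE1 cE2 cH1 cH2 a h
      · intro h
        have := CIter_conj E (H : Set G) δ' z⁻¹
          (fun a ha => by rw [inv_inv]; exact cE2 a ha)
          (fun a ha => by rw [inv_inv]; exact cE1 a ha)
          (fun a ha => by rw [inv_inv]; exact cH2 a ha)
          (fun a ha => by rw [inv_inv]; exact cH1 a ha) _ h
        have e : z⁻¹ * (z * a * z⁻¹) * z⁻¹⁻¹ = a := by group
        rw [e] at this; exact this
    · intro h hh
      exact IH η (lt_add_one η) (zcl h hh)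
  · rw [mem_ZSet_limit hlim] at hz
    obtain ⟨γ, hγ, hz⟩ := hz
    rw [mem_CIter_limit hlim]
    exact ⟨γ, hγ, IH γ hγ hz⟩

end Proofs4
section Proofs5
variable {G : Type*} [Group G]

lemma osucc_le_of_lt {a b : Ordinal} (h : a < b) : a + 1 ≤ b := by
  rw [Ordinal.add_one_eq_succ]; exact Order.succ_le_of_lt h

lemma oadd_one_le_add_one {a b : Ordinal} (h : a ≤ b) : a + 1 ≤ b + 1 := by
  rw [Ordinal.add_one_eq_succ, Ordinal.add_one_eq_succ]; exact Order.succ_le_succ h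

lemma olt_succ_iff {a b : Ordinal} : a < b + 1 ↔ a ≤ b := by
  rw [Ordinal.add_one_eq_succ]; exact Order.lt_succ_iff

/-- Key commutation: an element of `Env (η+1)` commutes with `CIter (Env γ) (η+1)`
modulo `CIter (Env γ) η`. -/
lemma cent {Hs : Set G} {γ η : Ordinal} {x u : G}
    (hx1 : x ∈ Env Hs (η + 1)) (hx2 : x ∈ Env Hs γ)
    (hu : u ∈ CIter (Env Hs γ) Hs (η + 1))
    (cmp1 : CIter (Env Hs γ) Hs (η + 1) =
      CIter (Env Hs η) Hs (η + 1) ∩ Env Hs γ)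
    (cmp0 : CIter (Env Hs γ) Hs η = CIter (Env Hs η) Hs η ∩ Env Hs γ)
    (hEγ : SClosed (Env Hs γ)) :
    pcomm x u ∈ CIter (Env Hs γ) Hs η := by
  have hu' : u ∈ CIter (Env Hs η) Hs (η + 1) ∩ Env Hs γ := cmp1 ▸ hu
  have h1 : pcomm x u ∈ CIter (Env Hs η) Hs η := (mem_Env_succ.mp hx1).2 u hu'.1
  have h2 : pcomm x u ∈ Env Hs γ :=
    pcomm_mem_of_closed hEγ.2.1 hEγ.2.2 hx2 hu'.2
  rw [cmp0]; exact ⟨h1, h2⟩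

/-- Elements whose inverses share all envelope memberships normalize all the
iterated centralizers. -/
lemma conjall (Hs : Set G) : ∀ ε : Ordinal, ∀ γ : Ordinal, ∀ x : G,
    (∀ η < ε, x ∈ Env Hs (η + 1)) → (∀ η < ε, x⁻¹ ∈ Env Hs (η + 1)) →
    x ∈ Env Hs γ → x⁻¹ ∈ Env Hs γ →
    (∀ η < ε, CIter (Env Hs γ) Hs (η + 1) = CIter (Env Hs η) Hs (η + 1) ∩ Env Hs γ ∧
              CIter (Env Hs γ) Hs η = CIter (Env Hs η) Hs η ∩ Env Hs γ) →
    SClosed (Env Hs γ) →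
    ∀ u ∈ CIter (Env Hs γ) Hs ε,
      x * u * x⁻¹ ∈ CIter (Env Hs γ) Hs ε ∧ x⁻¹ * u * x ∈ CIter (Env Hs γ) Hs ε := by
  intro ε
  induction ε using Ordinal.induction with
  | h ε IH =>
  intro γ x hxe hxe' hxγ hxγ' hcmp hEγ u hu
  have props := CIter_props (Env Hs γ) Hs hEγ
  rcases Ordinal.zero_or_succ_or_isSuccLimit ε with h0 | ⟨η, rfl⟩ | hlim
  · subst h0
    rw [mem_CIter_zero] at hu; subst hu
    constructor <;> · rw [mem_CIter_zero]; group
  · rw [← Ordinal.add_one_eq_succ] at *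
    have c1 : pcomm x u ∈ CIter (Env Hs γ) Hs η :=
      cent (hxe η (lt_add_one η)) hxγ hu (hcmp η (lt_add_one η)).1
        (hcmp η (lt_add_one η)).2 hEγ
    have c2 : pcomm x⁻¹ u ∈ CIter (Env Hs γ) Hs η :=
      cent (hxe' η (lt_add_one η)) hxγ' hu (hcmp η (lt_add_one η)).1
        (hcmp η (lt_add_one η)).2 hEγ
    constructor
    · have e : x * u * x⁻¹ = u * (pcomm x⁻¹ u)⁻¹ := by simp [pcomm]; group
      rw [e]
      exact (props (η + 1)).1.2.1 _ hu _
        ((props (η + 1)).2.1 η ((le_self_add : η ≤ η + 1)) ((props η).1.2.2 _ c2))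
    · have e : x⁻¹ * u * x = u * (pcomm x u)⁻¹ := by simp [pcomm]; group
      rw [e]
      exact (props (η + 1)).1.2.1 _ hu _
        ((props (η + 1)).2.1 η ((le_self_add : η ≤ η + 1)) ((props η).1.2.2 _ c1))
  · rw [mem_CIter_limit hlim] at hu
    obtain ⟨θ, hθ, hu⟩ := hu
    have := IH θ hθ γ x (fun η hη => hxe η (hη.trans hθ)) (fun η hη => hxe' η (hη.trans hθ))
      hxγ hxγ' (fun η hη => hcmp η (hη.trans hθ)) hEγ u hu
    rw [mem_CIter_limit hlim, mem_CIter_limit hlim]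
    exact ⟨⟨θ, hθ, this.1⟩, ⟨θ, hθ, this.2⟩⟩

end Proofs5
section Proofs6
variable {G : Type*} [Group G]

/-- Comparison of iterated centralizers over different envelope levels. -/
lemma cmp_lemma (Hs : Set G) (β : Ordinal)
    (hIH : ∀ γ < β, SClosed (Env Hs γ) ∧ Hs ⊆ Env Hs γ ∧
      (∀ γ' ≤ γ, Env Hs γ ⊆ Env Hs γ') ∧
      (∀ γ' ≤ γ, ∀ δ ≤ γ' + 1,
        CIter (Env Hs γ) Hs δ = CIter (Env Hs γ') Hs δ ∩ Env Hs γ))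
    (SCβ : SClosed (Env Hs β)) (HsubEβ : Hs ⊆ Env Hs β)
    (monoβ : ∀ γ ≤ β, Env Hs β ⊆ Env Hs γ) :
    ∀ δ : Ordinal, ∀ γ, γ ≤ β → δ ≤ γ + 1 →
      CIter (Env Hs β) Hs δ = CIter (Env Hs γ) Hs δ ∩ Env Hs β := by
  intro δ
  induction δ using Ordinal.induction with
  | h δ IHδ =>
  intro γ hγβ hδγ
  have SCγ : SClosed (Env Hs γ) := by
    rcases eq_or_lt_of_le hγβ with rfl | hlt
    · exact SCβ
    · exact (hIH γ hlt).1
  have cmpsmall : ∀ δ'' < δ, ∀ γ'' ≤ γ, δ'' ≤ γ'' + 1 →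
      CIter (Env Hs γ) Hs δ'' = CIter (Env Hs γ'') Hs δ'' ∩ Env Hs γ := by
    intro δ'' hδ'' γ'' hγ'' hle
    rcases eq_or_lt_of_le hγβ with rfl | hlt
    · exact IHδ δ'' hδ'' γ'' hγ'' hle
    · exact (hIH γ hlt).2.2.2 γ'' hγ'' δ'' hle
  have monoγ : ∀ γ'' ≤ γ, Env Hs γ ⊆ Env Hs γ'' := by
    rcases eq_or_lt_of_le hγβ with rfl | hlt
    · exact monoβ
    · exact (hIH γ hlt).2.2.1
  rcases Ordinal.zero_or_succ_or_isSuccLimit δ with h0 | ⟨δ', rfl⟩ | hlim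
  · subst h0
    rw [CIter_zero, CIter_zero]
    ext x
    simp only [Set.mem_inter_iff, Set.mem_singleton_iff]
    exact ⟨fun h => ⟨h, h ▸ SCβ.1⟩, fun h => h.1⟩
  · rw [← Ordinal.add_one_eq_succ] at *
    have hδ'γ : δ' ≤ γ := by
      rw [Ordinal.add_one_eq_succ, Ordinal.add_one_eq_succ] at hδγ
      exact Order.succ_le_succ_iff.mp hδγ
    ext x
    simp only [Set.mem_inter_iff]
    constructor
    · intro hx
      have hx' := hx
      rw [mem_CIter_succ] at hx'
      obtain ⟨xEβ, xN, xH⟩ := hx'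
      have hxinv : x⁻¹ ∈ Env Hs β := SCβ.2.2 _ xEβ
      refine ⟨?_, xEβ⟩
      rw [mem_CIter_succ]
      refine ⟨monoβ γ hγβ xEβ, ?_, ?_⟩
      · intro ε hε a
        have hεδ' : ε ≤ δ' := olt_succ_iff.mp hε
        have hca := conjall Hs ε γ x
          (fun η hη => monoβ (η + 1)
            (le_trans (osucc_le_of_lt (lt_of_lt_of_le hη (hεδ'.trans hδ'γ))) hγβ) xEβ)
          (fun η hη => monoβ (η + 1)
            (le_trans (osucc_le_of_lt (lt_of_lt_of_le hη (hεδ'.trans hδ'γ))) hγβ) hxinv)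
          (monoβ γ hγβ xEβ) (monoβ γ hγβ hxinv)
          (fun η hη => ⟨cmpsmall (η + 1) (olt_succ_iff.mpr (osucc_le_of_lt (lt_of_lt_of_le hη hεδ'))) η
              (le_trans hη.le (hεδ'.trans hδ'γ)) le_rfl,
            cmpsmall η (lt_of_lt_of_le hη (le_trans hεδ' ((le_self_add : δ' ≤ δ' + 1)))) η
              (le_trans hη.le (hεδ'.trans hδ'γ)) ((le_self_add : η ≤ η + 1))⟩)
          SCγ
        constructor
        · exact fun h => (hca a h).1
        · intro h
          have := (hca _ h).2
          have e : x⁻¹ * (x * a * x⁻¹) * x = a := by group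
          rw [e] at this; exact this
      · intro h hh
        have := xH h hh
        rw [IHδ δ' (lt_add_one δ') γ hγβ (le_trans hδ'γ ((le_self_add : γ ≤ γ + 1)))] at this
        exact this.1
    · rintro ⟨hxγ1, hxβ⟩
      have hxγ1' := hxγ1
      rw [mem_CIter_succ] at hxγ1' ⊢
      obtain ⟨xEγ, xNγ, xHγ⟩ := hxγ1'
      refine ⟨hxβ, ?_, ?_⟩
      · intro ε hε a
        have hεδ' : ε ≤ δ' := olt_succ_iff.mp hε
        rw [IHδ ε (lt_of_le_of_lt hεδ' (lt_add_one δ')) γ hγβ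
          (le_trans (hεδ'.trans hδ'γ) ((le_self_add : γ ≤ γ + 1)))]
        simp only [Set.mem_inter_iff]
        constructor
        · rintro ⟨h1, h2⟩
          refine ⟨(xNγ ε hε a).mp h1, SCβ.2.1 _ (SCβ.2.1 _ hxβ _ h2) _ (SCβ.2.2 _ hxβ)⟩
        · rintro ⟨h1, h2⟩
          refine ⟨(xNγ ε hε a).mpr h1, ?_⟩
          have : x⁻¹ * (x * a * x⁻¹) * x ∈ Env Hs β :=
            SCβ.2.1 _ (SCβ.2.1 _ (SCβ.2.2 _ hxβ) _ h2) _ hxβ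
          have e : x⁻¹ * (x * a * x⁻¹) * x = a := by group
          rw [e] at this; exact this
      · intro h hh
        rw [IHδ δ' (lt_add_one δ') γ hγβ (le_trans hδ'γ ((le_self_add : γ ≤ γ + 1)))]
        exact ⟨xHγ h hh, pcomm_mem_of_closed SCβ.2.1 SCβ.2.2 hxβ (HsubEβ hh)⟩
  · rw [CIter_limit _ _ hlim, CIter_limit _ _ hlim]
    ext x
    simp only [Set.mem_iUnion, Set.mem_inter_iff]
    constructor
    · rintro ⟨ε, hε, hx⟩
      have := IHδ ε hε γ hγβ (le_trans hε.le hδγ) ▸ hx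
      rw [IHδ ε hε γ hγβ (le_trans hε.le hδγ)] at hx
      exact ⟨⟨ε, hε, hx.1⟩, hx.2⟩
    · rintro ⟨⟨ε, hε, hx⟩, hxβ⟩
      refine ⟨ε, hε, ?_⟩
      rw [IHδ ε hε γ hγβ (le_trans hε.le hδγ)]
      exact ⟨hx, hxβ⟩

end Proofs6
section Proofs7
variable {G : Type*} [Group G]

theorem Env_master (Hs : Set G) : ∀ β : Ordinal,
    SClosed (Env Hs β) ∧ Hs ⊆ Env Hs β ∧
    (∀ γ ≤ β, Env Hs β ⊆ Env Hs γ) ∧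
    (∀ γ ≤ β, ∀ δ ≤ γ + 1,
      CIter (Env Hs β) Hs δ = CIter (Env Hs γ) Hs δ ∩ Env Hs β) := by
  intro β
  induction β using Ordinal.induction with
  | h β IH =>
  rcases Ordinal.zero_or_succ_or_isSuccLimit β with h0 | ⟨ζ, rfl⟩ | hlim
  · subst h0
    have SC : SClosed (Env Hs 0) := by
      rw [Env_zero]
      exact ⟨trivial, fun _ _ _ _ => trivial, fun _ _ => trivial⟩
    refine ⟨SC, ?_, ?_, ?_⟩
    · rw [Env_zero]; exact Set.subset_univ _
    · intro γ hγ; rw [nonpos_iff_eq_zero.mp hγ]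
    · intro γ hγ δ hδ
      rw [nonpos_iff_eq_zero.mp hγ, Env_zero, Set.inter_univ]
  · rw [← Ordinal.add_one_eq_succ] at *
    obtain ⟨SCζ, HsubEζ, monoζ, cmpζ⟩ := IH ζ (lt_add_one ζ)
    have propsζ := CIter_props (Env Hs ζ) Hs SCζ
    have subζ : Env Hs (ζ + 1) ⊆ Env Hs ζ := fun g hg => (mem_Env_succ.mp hg).1
    have stab : ∀ g ∈ Env Hs (ζ + 1), ∀ d ∈ CIter (Env Hs ζ) Hs ζ,
        g⁻¹ * d * g ∈ CIter (Env Hs ζ) Hs ζ := by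
      intro g hg d hd
      have hd1 : d⁻¹ ∈ CIter (Env Hs ζ) Hs (ζ + 1) :=
        (propsζ (ζ + 1)).2.1 ζ ((le_self_add : ζ ≤ ζ + 1)) ((propsζ ζ).1.2.2 _ hd)
      have h2 : pcomm g d⁻¹ ∈ CIter (Env Hs ζ) Hs ζ := (mem_Env_succ.mp hg).2 _ hd1
      have e : g⁻¹ * d * g = pcomm g d⁻¹ * d := by simp only [pcomm]; group
      rw [e]; exact (propsζ ζ).1.2.1 _ h2 _ hd
    have SC : SClosed (Env Hs (ζ + 1)) := by
      refine ⟨?_, ?_, ?_⟩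
      · rw [mem_Env_succ]
        exact ⟨SCζ.1, fun c hc => by rw [pcomm_one_left]; exact (propsζ ζ).1.1⟩
      · intro g1 hg1 g2 hg2
        have hg2' := hg2
        rw [mem_Env_succ] at hg1 hg2 ⊢
        refine ⟨SCζ.2.1 _ hg1.1 _ hg2.1, fun c hc => ?_⟩
        rw [pcomm_mul_left]
        exact (propsζ ζ).1.2.1 _ (stab g2 hg2' _ (hg1.2 c hc)) _ (hg2.2 c hc)
      · intro g hg
        have hgζ : g ∈ Env Hs ζ := subζ hg
        have hginv : g⁻¹ ∈ Env Hs ζ := SCζ.2.2 _ hgζ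
        rw [mem_Env_succ]
        refine ⟨hginv, fun c hc => ?_⟩
        have hu : (pcomm g c)⁻¹ ∈ CIter (Env Hs ζ) Hs ζ :=
          (propsζ ζ).1.2.2 _ ((mem_Env_succ.mp hg).2 c hc)
        have hca := conjall Hs ζ ζ g
          (fun η hη => monoζ (η + 1) (osucc_le_of_lt hη) hgζ)
          (fun η hη => monoζ (η + 1) (osucc_le_of_lt hη) hginv)
          hgζ hginv
          (fun η hη => ⟨cmpζ η hη.le (η + 1) le_rfl,
            cmpζ η hη.le η ((le_self_add : η ≤ η + 1))⟩)
          SCζ _ hu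
        rw [pcomm_inv_left]
        exact hca.1
    have HsubE : Hs ⊆ Env Hs (ζ + 1) := by
      intro h hh
      rw [mem_Env_succ]
      refine ⟨HsubEζ hh, fun c hc => ?_⟩
      have := (mem_CIter_succ.mp hc).2.2 h hh
      rw [← pcomm_inv_eq]
      exact (propsζ ζ).1.2.2 _ this
    have mono : ∀ γ ≤ ζ + 1, Env Hs (ζ + 1) ⊆ Env Hs γ := by
      intro γ hγ
      rcases eq_or_lt_of_le hγ with rfl | hlt
      · exact subset_rfl
      · exact subset_trans subζ (monoζ γ (olt_succ_iff.mp hlt))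
    exact ⟨SC, HsubE, mono, fun γ hγ δ hδ => cmp_lemma Hs (ζ + 1) (fun γ' hγ' => IH γ' hγ') SC HsubE mono δ γ hγ hδ⟩
  · have SC : SClosed (Env Hs β) := by
      refine ⟨?_, ?_, ?_⟩
      · rw [mem_Env_limit hlim]; exact fun γ hγ => (IH γ hγ).1.1
      · intro x hx y hy
        rw [mem_Env_limit hlim] at hx hy ⊢
        exact fun γ hγ => (IH γ hγ).1.2.1 _ (hx γ hγ) _ (hy γ hγ)
      · intro x hx
        rw [mem_Env_limit hlim] at hx ⊢
        exact fun γ hγ => (IH γ hγ).1.2.2 _ (hx γ hγ)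
    have HsubE : Hs ⊆ Env Hs β :=
      fun h hh => (mem_Env_limit hlim).mpr fun γ hγ => (IH γ hγ).2.1 hh
    have mono : ∀ γ ≤ β, Env Hs β ⊆ Env Hs γ := by
      intro γ hγ
      rcases eq_or_lt_of_le hγ with rfl | hlt
      · exact subset_rfl
      · exact fun g hg => (mem_Env_limit hlim).mp hg γ hlt
    exact ⟨SC, HsubE, mono, fun γ hγ δ hδ => cmp_lemma Hs β (fun γ' hγ' => IH γ' hγ') SC HsubE mono δ γ hγ hδ⟩

end Proofs7

theorem stmt13 {G : Type*} [Group G] (H : Subgroup G) (α : Ordinal)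
    (hH : ZSet (H : Set G) (α + 1) = (H : Set G)) :
    ZSet (Env (H : Set G) (α + 1)) (α + 1) = Env (H : Set G) (α + 1) ∧
      (ZSet (H : Set G) α ≠ (H : Set G) →
        ZSet (Env (H : Set G) (α + 1)) α ≠ Env (H : Set G) (α + 1)) := by
  obtain ⟨SCE, HsubE, monoE, cmpE⟩ := Env_master (H : Set G) (α + 1)
  obtain ⟨SCA, HsubA, monoA, cmpA⟩ := Env_master (H : Set G) α
  have propsA := CIter_props (Env (H : Set G) α) (H : Set G) SCA
  have subEA : Env (H : Set G) (α + 1) ⊆ Env (H : Set G) α :=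
    monoE α ((le_self_add : α ≤ α + 1))
  have HC : (H : Set G) ⊆ CIter (Env (H : Set G) α) (H : Set G) (α + 1) := by
    intro h hh
    refine ZSet_subset_CIter H (Env (H : Set G) α) SCA HsubA (α + 1) ?_
    rw [hH]; exact hh
  have EC : Env (H : Set G) (α + 1) ⊆ CIter (Env (H : Set G) α) (H : Set G) (α + 1) := by
    intro g hg
    have hginv : g⁻¹ ∈ Env (H : Set G) (α + 1) := SCE.2.2 _ hg
    rw [mem_CIter_succ]
    refine ⟨subEA hg, ?_, ?_⟩
    · intro ε hε a
      have hεα : ε ≤ α := olt_succ_iff.mp hε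
      have hca := conjall (H : Set G) ε α g
        (fun η hη => monoE (η + 1)
          (le_trans (osucc_le_of_lt (lt_of_lt_of_le hη hεα)) ((le_self_add : α ≤ α + 1))) hg)
        (fun η hη => monoE (η + 1)
          (le_trans (osucc_le_of_lt (lt_of_lt_of_le hη hεα)) ((le_self_add : α ≤ α + 1))) hginv)
        (subEA hg) (subEA hginv)
        (fun η hη => ⟨cmpA η (le_trans hη.le hεα) (η + 1) le_rfl,
          cmpA η (le_trans hη.le hεα) η ((le_self_add : η ≤ η + 1))⟩)
        SCA
      constructor
      · exact fun h => (hca a h).1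
      · intro h
        have := (hca _ h).2
        have e : g⁻¹ * (g * a * g⁻¹) * g = a := by group
        rw [e] at this; exact this
    · intro h hh
      exact (mem_Env_succ.mp hg).2 h (HC hh)
  have CE : CIter (Env (H : Set G) α) (H : Set G) α ⊆ Env (H : Set G) (α + 1) := by
    intro d hd
    rw [mem_Env_succ]
    refine ⟨(propsA α).2.2 hd, fun c hc => ?_⟩
    have hnorm := (mem_CIter_succ.mp hc).2.1 α (lt_add_one α)
    have h1 : c⁻¹ * d * c ∈ CIter (Env (H : Set G) α) (H : Set G) α := by
      apply (hnorm (c⁻¹ * d * c)).mpr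
      have e : c * (c⁻¹ * d * c) * c⁻¹ = d := by group
      rw [e]; exact hd
    have e : pcomm d c = d⁻¹ * (c⁻¹ * d * c) := by simp [pcomm]; group
    rw [e]
    exact (propsA α).1.2.1 _ ((propsA α).1.2.2 _ hd) _ h1
  have ZE : ∀ δ : Ordinal, δ ≤ α → CIter (Env (H : Set G) α) (H : Set G) δ ⊆
      ZSet (Env (H : Set G) (α + 1)) δ := by
    intro δ
    induction δ using Ordinal.induction with
    | h δ IHδ =>
    intro hδα x hx
    rcases Ordinal.zero_or_succ_or_isSuccLimit δ with h0 | ⟨η, rfl⟩ | hlim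
    · subst h0
      rw [mem_CIter_zero] at hx; rw [mem_ZSet_zero]; exact hx
    · rw [← Ordinal.add_one_eq_succ] at *
      have hηα : η ≤ α := le_trans ((le_self_add : η ≤ η + 1)) hδα
      rw [mem_ZSet_succ]
      have hxE : x ∈ Env (H : Set G) (α + 1) := CE ((propsA α).2.1 (η + 1) hδα hx)
      refine ⟨hxE, fun g hg => ?_⟩
      have hgη1 : g ∈ Env (H : Set G) (η + 1) :=
        monoE (η + 1) (le_trans hδα ((le_self_add : α ≤ α + 1))) hg
      have hx' : x ∈ CIter (Env (H : Set G) η) (H : Set G) (η + 1) ∩ Env (H : Set G) α := by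
        rw [← cmpA η hηα (η + 1) le_rfl]; exact hx
      have hp : pcomm g x ∈ CIter (Env (H : Set G) η) (H : Set G) η :=
        (mem_Env_succ.mp hgη1).2 x hx'.1
      have hpA : pcomm g x ∈ Env (H : Set G) α :=
        pcomm_mem_of_closed SCA.2.1 SCA.2.2 (subEA hg) hx'.2
      have hfinal : pcomm x g ∈ CIter (Env (H : Set G) α) (H : Set G) η := by
        rw [cmpA η hηα η ((le_self_add : η ≤ η + 1)), ← pcomm_inv_eq]
        exact ⟨(CIter_props (Env (H : Set G) η) (H : Set G)
          (Env_master (H : Set G) η).1 η).1.2.2 _ hp, SCA.2.2 _ hpA⟩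
      exact IHδ η (lt_add_one η) hηα hfinal
    · rw [mem_CIter_limit hlim] at hx
      obtain ⟨ε, hε, hx⟩ := hx
      rw [mem_ZSet_limit hlim]
      exact ⟨ε, hε, IHδ ε hε (le_trans hε.le hδα) hx⟩
  constructor
  · ext x
    rw [mem_ZSet_succ]
    constructor
    · exact fun h => h.1
    · intro hx
      refine ⟨hx, fun g hg => ?_⟩
      exact ZE α le_rfl ((mem_Env_succ.mp hx).2 g (EC hg))
  · intro hne heq
    apply hne
    apply Set.Subset.antisymm
    · have := ZSet_mono (H : Set G) H.one_mem (α + 1) α ((le_self_add : α ≤ α + 1))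
      rw [hH] at this; exact this
    · intro h hh
      have hE : h ∈ ZSet (Env (H : Set G) (α + 1)) α := by rw [heq]; exact HsubE hh
      exact ZSet_restrict (Env (H : Set G) (α + 1)) H HsubE α h hE hh
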